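/- There exist unrooted binary phylogenetic trees T and T' on a taxon set X and a common 3-chain K of T and T' such that some maximum agreement forest of T and T' does not preserve K. (Hence the statement that every maximum agreement forest preserves a common 4-chain cannot be strengthened from 4-chains to 3-chains.) -/

import Mathlib

/-!
Common definitions for formalizing statements about maximum agreement forests
of unrooted binary phylogenetic trees.

An unrooted binary phylogenetic forest on a taxon set `X` is modelled as a
finite acyclic simple graph together with a labelling of taxa by vertices,
such that the vertices of degree ≤ 1 are exactly the (injectively) labelled
leaves and every other vertex has degree 3.  A tree is a connected forest.
Two phylogenetic trees on the same taxon set are regarded as equal when there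
is a label-preserving isomorphism; accordingly, the condition `T|U = T'|U`
(equality of the restrictions obtained by suppressing degree-2 vertices) is
encoded by the classical equivalent condition that `T` and `T'` induce the
same quartet topologies on `U` (for binary trees on a common leaf set,
equality of restrictions is equivalent to agreement of all quartets, where a
quartet `wx|yz` holds iff the path from `w` to `x` is vertex-disjoint from
the path from `y` to `z`).
-/

namespace Phylo

/-- An unrooted binary phylogenetic forest on the taxon set `X`:
a disjoint union of unrooted binary phylogenetic trees whose leaf (taxon)
sets partition `X`. -/
structure PhyloForest (α : Type) (X : Finset α) where
  /-- the vertex type -/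
  V : Type
  /-- the vertex set is finite -/
  fintV : Fintype V
  /-- the underlying simple graph -/
  G : SimpleGraph V
  /-- the graph is acyclic -/
  acyclic : G.IsAcyclic
  /-- the labelling of taxa by vertices (only its values on `X` matter) -/
  label : α → V
  /-- taxa are labelled injectively -/
  label_injOn : Set.InjOn label (↑X : Set α)
  /-- the labelled vertices are exactly the vertices of degree ≤ 1
  (leaves; a degree-0 vertex is a single-vertex tree of the forest) -/
  leaves_eq : label '' (↑X : Set α) = {v : V | (G.neighborSet v).ncard ≤ 1}
  /-- every unlabelled (internal) vertex has degree 3 -/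
  internal_deg : ∀ v : V, v ∉ label '' (↑X : Set α) → (G.neighborSet v).ncard = 3

/-- An unrooted binary phylogenetic tree is a connected phylogenetic forest. -/
def PhyloForest.IsTree {α : Type} {X : Finset α} (A : PhyloForest α X) : Prop :=
  A.G.Connected

/-- The unique neighbour of a leaf `ℓ` (an arbitrary neighbour in general;
for a leaf of a phylogenetic forest the neighbour is unique). -/
noncomputable def parentIn {V : Type} (G : SimpleGraph V) (ℓ : V) : V :=
  letI := Classical.dec (∃ w, G.Adj ℓ w)
  if h : ∃ w, G.Adj ℓ w then h.choose else ℓ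

/-- `p_x`, the unique neighbour of the leaf labelled `x`. -/
noncomputable def PhyloForest.parent {α : Type} {X : Finset α} (A : PhyloForest α X)
    (x : α) : A.V :=
  parentIn A.G (A.label x)

/-- A list of vertices forms a path in `G`: consecutive vertices are adjacent
and all vertices are distinct. -/
def IsVertexPath {V : Type} (G : SimpleGraph V) (P : List V) : Prop :=
  P.Chain' G.Adj ∧ P.Nodup

/-- `K = (ℓ₁, …, ℓₙ)` is an `n`-chain with respect to the graph `G` and the
labelling `lab`: the taxa are distinct, `n ≥ 2`, and either
`(p_{ℓ₁}, …, p_{ℓₙ})` is a path, or `p_{ℓ₁} = p_{ℓ₂}` and `(p_{ℓ₂}, …, p_{ℓₙ})`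
is a path, or `p_{ℓ_{n-1}} = p_{ℓₙ}` and `(p_{ℓ₁}, …, p_{ℓ_{n-1}})` is a path
(the last case is phrased via the reversed list; a reversed path is a path). -/
def IsChainIn {α V : Type} (G : SimpleGraph V) (lab : α → V) (K : List α) : Prop :=
  2 ≤ K.length ∧ K.Nodup ∧
    (IsVertexPath G (K.map fun x => parentIn G (lab x)) ∨
      (∃ p q Q, K.map (fun x => parentIn G (lab x)) = p :: q :: Q ∧ p = q ∧
        IsVertexPath G (q :: Q)) ∨
      (∃ p q Q, (K.map fun x => parentIn G (lab x)).reverse = p :: q :: Q ∧ p = q ∧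
        IsVertexPath G (q :: Q)))

/-- `K` is an `n`-chain of the phylogenetic forest `A` (i.e. of one of its
trees). -/
def PhyloForest.IsChain {α : Type} {X : Finset α} (A : PhyloForest α X)
    (K : List α) : Prop :=
  (∀ x ∈ K, x ∈ X) ∧ IsChainIn A.G A.label K

/-- The chain `K` is pendant: `p_{ℓ₁} = p_{ℓ₂}` or `p_{ℓ_{n-1}} = p_{ℓₙ}`. -/
def IsPendantIn {α V : Type} (G : SimpleGraph V) (lab : α → V) (K : List α) : Prop :=
  (∃ x y L, K = x :: y :: L ∧ parentIn G (lab x) = parentIn G (lab y)) ∨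
  (∃ x y L, K.reverse = x :: y :: L ∧ parentIn G (lab x) = parentIn G (lab y))

/-- The chain `K` is pendant in the phylogenetic forest `A`. -/
def PhyloForest.ChainPendant {α : Type} {X : Finset α} (A : PhyloForest α X)
    (K : List α) : Prop :=
  IsPendantIn A.G A.label K

/-- The set of vertices lying on some path between `x` and `y` in `G`
(in a tree: the vertices of the unique path from `x` to `y`). -/
def vertsBetween {V : Type} (G : SimpleGraph V) (x y : V) : Set V :=
  {w | ∃ p : G.Walk x y, p.IsPath ∧ w ∈ p.support}

/-- The vertex set of the embedding `A[U]`: the minimal subtree of `A`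
connecting the leaves labelled by `U` (the union of all pairwise paths). -/
def embed {α : Type} {X : Finset α} (A : PhyloForest α X) (U : Finset α) :
    Set A.V :=
  ⋃ x ∈ U, ⋃ y ∈ U, vertsBetween A.G (A.label x) (A.label y)

/-- The embedding `A[U]` uses the edge `{u,v}`. -/
def embedUsesEdge {α : Type} {X : Finset α} (A : PhyloForest α X) (U : Finset α)
    (u v : A.V) : Prop :=
  ∃ x ∈ U, ∃ y ∈ U, ∃ p : A.G.Walk (A.label x) (A.label y),
    p.IsPath ∧ s(u, v) ∈ p.edges

/-- `A` displays the quartet `wx|yz`: the path between (the leaves labelled)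
`w` and `x` is vertex-disjoint from the path between `y` and `z`. -/
def Quartet {α : Type} {X : Finset α} (A : PhyloForest α X) (w x y z : α) : Prop :=
  Disjoint (vertsBetween A.G (A.label w) (A.label x))
    (vertsBetween A.G (A.label y) (A.label z))

/-- `A|U = B|U`: the restrictions of `A` and `B` to the taxon set `U` are equal
(as phylogenetic trees up to label-preserving isomorphism), encoded by the
classical equivalent condition that all quartet topologies on `U` agree. -/
def SameTopology {α : Type} {X : Finset α} (A B : PhyloForest α X)
    (U : Finset α) : Prop :=
  ∀ w x y z : α, w ∈ U → x ∈ U → y ∈ U → z ∈ U → ([w, x, y, z] : List α).Nodup →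
    (Quartet A w x y z ↔ Quartet B w x y z)

/-- All taxa of `U` lie in the same tree (connected component) of the forest
`A`. -/
def InOneTree {α : Type} {X : Finset α} (A : PhyloForest α X) (U : Finset α) : Prop :=
  ∀ x ∈ U, ∀ y ∈ U, A.G.Reachable (A.label x) (A.label y)

/-- `F` is a partition of the taxon set `X` (into nonempty blocks). -/
def IsPartitionOn {α : Type} (X : Finset α) (F : Finset (Finset α)) : Prop :=
  (∀ U ∈ F, U ⊆ X ∧ U.Nonempty) ∧
  (∀ U ∈ F, ∀ W ∈ F, U ≠ W → Disjoint U W) ∧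
  (∀ x ∈ X, ∃ U ∈ F, x ∈ U)

/-- `F` is an agreement forest for `A` and `B`: a partition of `X`, refining
the partition of `X` given by the trees of `A` and of `B`, such that
`A|U = B|U` for every block `U`, and the embeddings of distinct blocks are
vertex-disjoint in `A` and in `B`.  (When `A` and `B` are trees the refinement
conditions hold trivially and this is exactly the notion of an agreement
forest for two trees; when `B` is a forest these are exactly the agreement
forests reachable by cutting edges in `B`.) -/
def IsAgreementForest {α : Type} {X : Finset α} (A B : PhyloForest α X)
    (F : Finset (Finset α)) : Prop :=
  IsPartitionOn X F ∧
  (∀ U ∈ F, InOneTree A U ∧ InOneTree B U) ∧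
  (∀ U ∈ F, SameTopology A B U) ∧
  ∀ U ∈ F, ∀ W ∈ F, U ≠ W →
    Disjoint (embed A U) (embed A W) ∧ Disjoint (embed B U) (embed B W)

/-- `F` is a maximum agreement forest (an agreement forest of minimum size,
the size being the number of blocks). -/
def IsMAF {α : Type} {X : Finset α} (A B : PhyloForest α X)
    (F : Finset (Finset α)) : Prop :=
  IsAgreementForest A B F ∧
    ∀ F₂ : Finset (Finset α), IsAgreementForest A B F₂ → F.card ≤ F₂.card

/-- The partition `F` preserves the taxon set `K`: all taxa of `K` lie in a
single block of `F`. -/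
def Preserves {α : Type} (F : Finset (Finset α)) (K : Finset α) : Prop :=
  ∃ U ∈ F, K ⊆ U

/-- `{p, q}` is a cherry of `A`: two distinct taxa with a common parent. -/
def IsCherry {α : Type} {X : Finset α} (A : PhyloForest α X) (p q : α) : Prop :=
  p ≠ q ∧ p ∈ X ∧ q ∈ X ∧ A.parent p = A.parent q

/-- `A` has a 2-2-2 star on `a,b,c,d,e,f`: `(a,b)`, `(c,d)`, `(e,f)` are
2-chains and there is a vertex `v` whose three neighbours are exactly
`p_a, p_c, p_e` (pairwise distinct) and which is distinct from
`p_b, p_d, p_f`. -/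
def Star222 {α : Type} {X : Finset α} (A : PhyloForest α X)
    (a b c d e f : α) : Prop :=
  A.IsChain [a, b] ∧ A.IsChain [c, d] ∧ A.IsChain [e, f] ∧
  A.parent a ≠ A.parent c ∧ A.parent a ≠ A.parent e ∧ A.parent c ≠ A.parent e ∧
  ∃ v : A.V, A.G.neighborSet v = {A.parent a, A.parent c, A.parent e} ∧
    v ≠ A.parent b ∧ v ≠ A.parent d ∧ v ≠ A.parent f

/-- `A` has a 2-2-1 star on `a,b,c,d,e`: `(a,b)` and `(c,d)` are 2-chains and
there is a vertex `v` whose three neighbours are exactly `p_a, p_c, p_e`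
(pairwise distinct) and which is distinct from `p_b` and `p_d`. -/
def Star221 {α : Type} {X : Finset α} (A : PhyloForest α X)
    (a b c d e : α) : Prop :=
  A.IsChain [a, b] ∧ A.IsChain [c, d] ∧ e ∈ X ∧
  A.parent a ≠ A.parent c ∧ A.parent a ≠ A.parent e ∧ A.parent c ≠ A.parent e ∧
  ∃ v : A.V, A.G.neighborSet v = {A.parent a, A.parent c, A.parent e} ∧
    v ≠ A.parent b ∧ v ≠ A.parent d

/-- `A` has a 2-1-1 star on `a,b,c,d`: `(a,b)` is a 2-chain and there is a
vertex `v` whose three neighbours are exactly `p_a, p_c, p_d` (pairwise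
distinct) and which is distinct from `p_b`. -/
def Star211 {α : Type} {X : Finset α} (A : PhyloForest α X)
    (a b c d : α) : Prop :=
  A.IsChain [a, b] ∧ c ∈ X ∧ d ∈ X ∧
  A.parent a ≠ A.parent c ∧ A.parent a ≠ A.parent d ∧ A.parent c ≠ A.parent d ∧
  ∃ v : A.V, A.G.neighborSet v = {A.parent a, A.parent c, A.parent d} ∧
    v ≠ A.parent b

/-- The vertices on the `u`-side after deleting the edge `{u,v}`:
the pendant subtree detached by removing that edge (in a tree). -/
def pendantSide {V : Type} (G : SimpleGraph V) (u v : V) : Set V :=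
  {w | (G.deleteEdges {s(u, v)}).Reachable u w}

/-- The graph obtained from `G` by restricting to the vertex set `C` and
suppressing the degree-2 vertex `v`: vertices of `C` are adjacent if they were
adjacent in `G`, or if they are distinct common neighbours of `v`. -/
def suppressAt {V : Type} (G : SimpleGraph V) (C : Set V) (v : V) :
    SimpleGraph V where
  Adj x y := x ∈ C ∧ y ∈ C ∧ (G.Adj x y ∨ (G.Adj x v ∧ G.Adj v y ∧ x ≠ y))
  symm := by
    refine ⟨?_⟩
    rintro x y ⟨hx, hy, h | ⟨h1, h2, h3⟩⟩
    · exact ⟨hy, hx, Or.inl h.symm⟩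
    · exact ⟨hy, hx, Or.inr ⟨h2.symm, h1.symm, h3.symm⟩⟩
  loopless := by
    refine ⟨?_⟩
    rintro x ⟨-, -, h | ⟨-, -, h⟩⟩
    · exact G.irrefl h
    · exact h rfl

/-- `T` has an interrupted 4-chain `(a,b,c,d)` with interrupter edge `{u,v}`
and interrupter-subtree taxon set `B`: removing the edge `{u,v}` detaches a
pendant subtree (the `u`-side) whose taxon set is exactly `B`, with
`∅ ≠ B ⊆ X ∖ {a,b,c,d}`; the endpoint `v` outside the pendant subtree lies on
the path of `T` between `p_b` and `p_c`; and `(a,b,c,d)` is a 4-chain of the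
tree obtained from `T` by deleting the pendant subtree together with the edge
`{u,v}` and suppressing the resulting degree-2 vertex `v`. -/
def HasInterrupter {α : Type} {X : Finset α} (T : PhyloForest α X)
    (a b c d : α) (B : Finset α) (u v : T.V) : Prop :=
  a ∈ X ∧ b ∈ X ∧ c ∈ X ∧ d ∈ X ∧
  B.Nonempty ∧ (↑B : Set α) ⊆ (↑X : Set α) \ {a, b, c, d} ∧
  T.G.Adj u v ∧ v ∉ pendantSide T.G u v ∧
  (∀ x ∈ X, (T.label x ∈ pendantSide T.G u v ↔ x ∈ B)) ∧
  v ∈ vertsBetween T.G (T.parent b) (T.parent c) ∧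
  IsChainIn (suppressAt T.G ((pendantSide T.G u v)ᶜ \ {v}) v) T.label [a, b, c, d]


/-! ### Auxiliary construction for the counterexample -/

private def E1 : List (Sym2 (Fin 6)) := [s(0,4), s(1,4), s(2,5), s(3,5), s(4,5)]
private def E2 : List (Sym2 (Fin 6)) := [s(0,4), s(2,4), s(1,5), s(3,5), s(4,5)]

private def mkG (E : List (Sym2 (Fin 6))) : SimpleGraph (Fin 6) where
  Adj x y := x ≠ y ∧ s(x,y) ∈ E
  symm := ⟨fun _ _ ⟨h1,h2⟩ => ⟨h1.symm, by rwa [Sym2.eq_swap]⟩⟩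
  loopless := ⟨fun _ ⟨h,_⟩ => h rfl⟩

private instance (E : List (Sym2 (Fin 6))) : DecidableRel (mkG E).Adj :=
  fun _ _ => inferInstanceAs (Decidable (_ ∧ _))

private instance (E : List (Sym2 (Fin 6))) (e : Sym2 (Fin 6)) :
    DecidableRel ((mkG E) \ SimpleGraph.fromEdgeSet {e}).Adj :=
  fun x y => decidable_of_iff ((mkG E).Adj x y ∧ ¬(s(x,y) = e))
    (by simp [SimpleGraph.deleteEdges_adj, Set.mem_singleton_iff]; intro h; simp [h.ne])

private abbrev G1 : SimpleGraph (Fin 6) := mkG E1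
private abbrev G2 : SimpleGraph (Fin 6) := mkG E2

private lemma acyclic_mkG (E : List (Sym2 (Fin 6)))
    (h : ∀ v w, (mkG E).Adj v w → ¬((mkG E) \ SimpleGraph.fromEdgeSet {s(v,w)}).Reachable v w) :
    (mkG E).IsAcyclic := by
  rw [SimpleGraph.isAcyclic_iff_forall_adj_isBridge]
  intro v w hvw
  rw [SimpleGraph.isBridge_iff]
  exact h v w hvw

private lemma acy1 : G1.IsAcyclic := acyclic_mkG E1 (by decide)
private lemma acy2 : G2.IsAcyclic := acyclic_mkG E2 (by decide)
private lemma conn1 : G1.Connected := ⟨by decide⟩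
private lemma conn2 : G2.Connected := ⟨by decide⟩

private def lab : ℕ → Fin 6
  | 1 => 0 | 2 => 1 | 3 => 2 | 4 => 3 | _ => 0

private lemma ncard_nbr (G : SimpleGraph (Fin 6)) [DecidableRel G.Adj] (v : Fin 6) :
    (G.neighborSet v).ncard = (G.neighborFinset v).card := by
  rw [SimpleGraph.neighborFinset_def, Set.ncard_eq_toFinset_card']

private def XX : Finset ℕ := {1,2,3,4}

private lemma leaves_eq_aux (G : SimpleGraph (Fin 6)) [DecidableRel G.Adj]
    (h : ∀ v : Fin 6, (G.neighborFinset v).card ≤ 1 ↔ (v = 0 ∨ v = 1 ∨ v = 2 ∨ v = 3)) :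
    lab '' (↑XX : Set ℕ) = {v : Fin 6 | (G.neighborSet v).ncard ≤ 1} := by
  ext v
  simp only [XX, Set.mem_image, Finset.coe_insert, Set.mem_insert_iff, Finset.coe_singleton,
    Set.mem_singleton_iff, Set.mem_setOf_eq, ncard_nbr, h]
  constructor
  · rintro ⟨a, (rfl | rfl | rfl | rfl), rfl⟩ <;> decide
  · rintro (rfl | rfl | rfl | rfl)
    · exact ⟨1, Or.inl rfl, rfl⟩
    · exact ⟨2, Or.inr (Or.inl rfl), rfl⟩
    · exact ⟨3, Or.inr (Or.inr (Or.inl rfl)), rfl⟩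
    · exact ⟨4, Or.inr (Or.inr (Or.inr rfl)), rfl⟩

private lemma internal_deg_aux (G : SimpleGraph (Fin 6)) [DecidableRel G.Adj]
    (h : (G.neighborFinset 4).card = 3 ∧ (G.neighborFinset 5).card = 3) :
    ∀ v : Fin 6, v ∉ lab '' (↑XX : Set ℕ) → (G.neighborSet v).ncard = 3 := by
  intro v hv
  rw [ncard_nbr]
  fin_cases v
  · exact absurd ⟨1, by simp [XX], rfl⟩ hv
  · exact absurd ⟨2, by simp [XX], rfl⟩ hv
  · exact absurd ⟨3, by simp [XX], rfl⟩ hv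
  · exact absurd ⟨4, by simp [XX], rfl⟩ hv
  · exact h.1
  · exact h.2

private lemma lab_injOn : Set.InjOn lab (↑XX : Set ℕ) := by
  intro a ha b hb h
  simp only [XX, Finset.coe_insert, Set.mem_insert_iff, Finset.coe_singleton,
    Set.mem_singleton_iff] at ha hb
  rcases ha with rfl | rfl | rfl | rfl <;> rcases hb with rfl | rfl | rfl | rfl <;>
    first | rfl | exact absurd h (by decide)

private def TT : PhyloForest ℕ XX where
  V := Fin 6
  fintV := inferInstance
  G := G1
  acyclic := acy1
  label := lab
  label_injOn := lab_injOn
  leaves_eq := leaves_eq_aux G1 (by decide)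
  internal_deg := internal_deg_aux G1 (by decide)

private def TT' : PhyloForest ℕ XX where
  V := Fin 6
  fintV := inferInstance
  G := G2
  acyclic := acy2
  label := lab
  label_injOn := lab_injOn
  leaves_eq := leaves_eq_aux G2 (by decide)
  internal_deg := internal_deg_aux G2 (by decide)


-- walks and vertsBetween computations
private lemma vb_eq {V : Type} {G : SimpleGraph V} (hG : G.IsAcyclic) {x y : V}
    (p : G.Walk x y) (hp : p.IsPath) :
    vertsBetween G x y = {w | w ∈ p.support} := by
  ext w
  constructor
  · rintro ⟨q, hq, hw⟩
    have h := hG.path_unique (⟨q, hq⟩ : G.Path x y) ⟨p, hp⟩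
    have hqp : q = p := congrArg Subtype.val h
    rwa [hqp] at hw
  · intro hw; exact ⟨p, hp, hw⟩

private lemma vb_comm {V : Type} (G : SimpleGraph V) (x y : V) :
    vertsBetween G x y = vertsBetween G y x := by
  ext w
  constructor <;> rintro ⟨p, hp, hw⟩ <;>
    exact ⟨p.reverse, hp.reverse, by simpa [SimpleGraph.Walk.support_reverse] using hw⟩

private lemma vb_self {V : Type} {G : SimpleGraph V} (hG : G.IsAcyclic) (x : V) :
    vertsBetween G x x = {w | w ∈ ([x] : List V)} :=
  vb_eq hG SimpleGraph.Walk.nil SimpleGraph.Walk.IsPath.nil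

-- T = G1 walks
private def wT12 : G1.Walk 0 1 := .cons (show G1.Adj 0 4 by decide) (.cons (show G1.Adj 4 1 by decide) (.nil))
private def wT13 : G1.Walk 0 2 := .cons (show G1.Adj 0 4 by decide) (.cons (show G1.Adj 4 5 by decide) (.cons (show G1.Adj 5 2 by decide) (.nil)))
private def wT23 : G1.Walk 1 2 := .cons (show G1.Adj 1 4 by decide) (.cons (show G1.Adj 4 5 by decide) (.cons (show G1.Adj 5 2 by decide) (.nil)))
private def wT24 : G1.Walk 1 3 := .cons (show G1.Adj 1 4 by decide) (.cons (show G1.Adj 4 5 by decide) (.cons (show G1.Adj 5 3 by decide) (.nil)))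
private def wT34 : G1.Walk 2 3 := .cons (show G1.Adj 2 5 by decide) (.cons (show G1.Adj 5 3 by decide) (.nil))

private lemma vbT12 : vertsBetween G1 (lab 1) (lab 2) = {w | w ∈ ([0,4,1] : List (Fin 6))} :=
  vb_eq acy1 wT12 (by rw [SimpleGraph.Walk.isPath_def]; decide)
private lemma vbT13 : vertsBetween G1 (lab 1) (lab 3) = {w | w ∈ ([0,4,5,2] : List (Fin 6))} :=
  vb_eq acy1 wT13 (by rw [SimpleGraph.Walk.isPath_def]; decide)
private lemma vbT23 : vertsBetween G1 (lab 2) (lab 3) = {w | w ∈ ([1,4,5,2] : List (Fin 6))} :=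
  vb_eq acy1 wT23 (by rw [SimpleGraph.Walk.isPath_def]; decide)
private lemma vbT24 : vertsBetween G1 (lab 2) (lab 4) = {w | w ∈ ([1,4,5,3] : List (Fin 6))} :=
  vb_eq acy1 wT24 (by rw [SimpleGraph.Walk.isPath_def]; decide)
private lemma vbT34 : vertsBetween G1 (lab 3) (lab 4) = {w | w ∈ ([2,5,3] : List (Fin 6))} :=
  vb_eq acy1 wT34 (by rw [SimpleGraph.Walk.isPath_def]; decide)
private lemma vbT32 : vertsBetween G1 (lab 3) (lab 2) = {w | w ∈ ([1,4,5,2] : List (Fin 6))} :=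
  (vb_comm G1 _ _).trans vbT23
private lemma vbT42 : vertsBetween G1 (lab 4) (lab 2) = {w | w ∈ ([1,4,5,3] : List (Fin 6))} :=
  (vb_comm G1 _ _).trans vbT24
private lemma vbT43 : vertsBetween G1 (lab 4) (lab 3) = {w | w ∈ ([2,5,3] : List (Fin 6))} :=
  (vb_comm G1 _ _).trans vbT34
private lemma vbT11 : vertsBetween G1 (lab 1) (lab 1) = {w | w ∈ ([0] : List (Fin 6))} := vb_self acy1 _
private lemma vbT22 : vertsBetween G1 (lab 2) (lab 2) = {w | w ∈ ([1] : List (Fin 6))} := vb_self acy1 _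
private lemma vbT33 : vertsBetween G1 (lab 3) (lab 3) = {w | w ∈ ([2] : List (Fin 6))} := vb_self acy1 _
private lemma vbT44 : vertsBetween G1 (lab 4) (lab 4) = {w | w ∈ ([3] : List (Fin 6))} := vb_self acy1 _

-- T' = G2 walks (edges 0-4, 2-4, 1-5, 3-5, 4-5)
private def wS12 : G2.Walk 0 1 := .cons (show G2.Adj 0 4 by decide) (.cons (show G2.Adj 4 5 by decide) (.cons (show G2.Adj 5 1 by decide) (.nil)))
private def wS13 : G2.Walk 0 2 := .cons (show G2.Adj 0 4 by decide) (.cons (show G2.Adj 4 2 by decide) (.nil))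
private def wS23 : G2.Walk 1 2 := .cons (show G2.Adj 1 5 by decide) (.cons (show G2.Adj 5 4 by decide) (.cons (show G2.Adj 4 2 by decide) (.nil)))
private def wS24 : G2.Walk 1 3 := .cons (show G2.Adj 1 5 by decide) (.cons (show G2.Adj 5 3 by decide) (.nil))
private def wS34 : G2.Walk 2 3 := .cons (show G2.Adj 2 4 by decide) (.cons (show G2.Adj 4 5 by decide) (.cons (show G2.Adj 5 3 by decide) (.nil)))

private lemma vbS12 : vertsBetween G2 (lab 1) (lab 2) = {w | w ∈ ([0,4,5,1] : List (Fin 6))} :=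
  vb_eq acy2 wS12 (by rw [SimpleGraph.Walk.isPath_def]; decide)
private lemma vbS13 : vertsBetween G2 (lab 1) (lab 3) = {w | w ∈ ([0,4,2] : List (Fin 6))} :=
  vb_eq acy2 wS13 (by rw [SimpleGraph.Walk.isPath_def]; decide)
private lemma vbS23 : vertsBetween G2 (lab 2) (lab 3) = {w | w ∈ ([1,5,4,2] : List (Fin 6))} :=
  vb_eq acy2 wS23 (by rw [SimpleGraph.Walk.isPath_def]; decide)
private lemma vbS24 : vertsBetween G2 (lab 2) (lab 4) = {w | w ∈ ([1,5,3] : List (Fin 6))} :=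
  vb_eq acy2 wS24 (by rw [SimpleGraph.Walk.isPath_def]; decide)
private lemma vbS34 : vertsBetween G2 (lab 3) (lab 4) = {w | w ∈ ([2,4,5,3] : List (Fin 6))} :=
  vb_eq acy2 wS34 (by rw [SimpleGraph.Walk.isPath_def]; decide)
private lemma vbS32 : vertsBetween G2 (lab 3) (lab 2) = {w | w ∈ ([1,5,4,2] : List (Fin 6))} :=
  (vb_comm G2 _ _).trans vbS23
private lemma vbS42 : vertsBetween G2 (lab 4) (lab 2) = {w | w ∈ ([1,5,3] : List (Fin 6))} :=
  (vb_comm G2 _ _).trans vbS24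
private lemma vbS43 : vertsBetween G2 (lab 4) (lab 3) = {w | w ∈ ([2,4,5,3] : List (Fin 6))} :=
  (vb_comm G2 _ _).trans vbS34
private lemma vbS22 : vertsBetween G2 (lab 2) (lab 2) = {w | w ∈ ([1] : List (Fin 6))} := vb_self acy2 _
private lemma vbS33 : vertsBetween G2 (lab 3) (lab 3) = {w | w ∈ ([2] : List (Fin 6))} := vb_self acy2 _
private lemma vbS44 : vertsBetween G2 (lab 4) (lab 4) = {w | w ∈ ([3] : List (Fin 6))} := vb_self acy2 _
private lemma vbS11 : vertsBetween G2 (lab 1) (lab 1) = {w | w ∈ ([0] : List (Fin 6))} := vb_self acy2 _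

-- parents
private lemma parentIn_eq {V : Type} (G : SimpleGraph V) {ℓ u : V} (h : G.Adj ℓ u)
    (huniq : ∀ w, G.Adj ℓ w → w = u) : parentIn G ℓ = u := by
  unfold parentIn
  split
  next hh => exact huniq _ hh.choose_spec
  next hh => exact absurd ⟨u, h⟩ hh

private lemma pT1 : parentIn G1 (lab 1) = 4 := parentIn_eq G1 (ℓ := lab 1) (u := 4) (by decide) (by decide)
private lemma pT2 : parentIn G1 (lab 2) = 4 := parentIn_eq G1 (ℓ := lab 2) (u := 4) (by decide) (by decide)
private lemma pT3 : parentIn G1 (lab 3) = 5 := parentIn_eq G1 (ℓ := lab 3) (u := 5) (by decide) (by decide)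
private lemma pS1 : parentIn G2 (lab 1) = 4 := parentIn_eq G2 (ℓ := lab 1) (u := 4) (by decide) (by decide)
private lemma pS2 : parentIn G2 (lab 2) = 5 := parentIn_eq G2 (ℓ := lab 2) (u := 5) (by decide) (by decide)
private lemma pS3 : parentIn G2 (lab 3) = 4 := parentIn_eq G2 (ℓ := lab 3) (u := 4) (by decide) (by decide)

private lemma vbTT11 : vertsBetween TT.G (TT.label 1) (TT.label 1) = vertsBetween (mkG E1) (lab 1) (lab 1) := rfl
private lemma vbTT22 : vertsBetween TT.G (TT.label 2) (TT.label 2) = vertsBetween (mkG E1) (lab 2) (lab 2) := rfl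
private lemma vbTT33 : vertsBetween TT.G (TT.label 3) (TT.label 3) = vertsBetween (mkG E1) (lab 3) (lab 3) := rfl
private lemma vbTT44 : vertsBetween TT.G (TT.label 4) (TT.label 4) = vertsBetween (mkG E1) (lab 4) (lab 4) := rfl
private lemma vbTT23 : vertsBetween TT.G (TT.label 2) (TT.label 3) = vertsBetween (mkG E1) (lab 2) (lab 3) := rfl
private lemma vbTT24 : vertsBetween TT.G (TT.label 2) (TT.label 4) = vertsBetween (mkG E1) (lab 2) (lab 4) := rfl
private lemma vbTT34 : vertsBetween TT.G (TT.label 3) (TT.label 4) = vertsBetween (mkG E1) (lab 3) (lab 4) := rfl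
private lemma vbTT32 : vertsBetween TT.G (TT.label 3) (TT.label 2) = vertsBetween (mkG E1) (lab 3) (lab 2) := rfl
private lemma vbTT42 : vertsBetween TT.G (TT.label 4) (TT.label 2) = vertsBetween (mkG E1) (lab 4) (lab 2) := rfl
private lemma vbTT43 : vertsBetween TT.G (TT.label 4) (TT.label 3) = vertsBetween (mkG E1) (lab 4) (lab 3) := rfl
private lemma vbSS11 : vertsBetween TT'.G (TT'.label 1) (TT'.label 1) = vertsBetween (mkG E2) (lab 1) (lab 1) := rfl
private lemma vbSS22 : vertsBetween TT'.G (TT'.label 2) (TT'.label 2) = vertsBetween (mkG E2) (lab 2) (lab 2) := rfl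
private lemma vbSS33 : vertsBetween TT'.G (TT'.label 3) (TT'.label 3) = vertsBetween (mkG E2) (lab 3) (lab 3) := rfl
private lemma vbSS44 : vertsBetween TT'.G (TT'.label 4) (TT'.label 4) = vertsBetween (mkG E2) (lab 4) (lab 4) := rfl
private lemma vbSS23 : vertsBetween TT'.G (TT'.label 2) (TT'.label 3) = vertsBetween (mkG E2) (lab 2) (lab 3) := rfl
private lemma vbSS24 : vertsBetween TT'.G (TT'.label 2) (TT'.label 4) = vertsBetween (mkG E2) (lab 2) (lab 4) := rfl
private lemma vbSS34 : vertsBetween TT'.G (TT'.label 3) (TT'.label 4) = vertsBetween (mkG E2) (lab 3) (lab 4) := rfl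
private lemma vbSS32 : vertsBetween TT'.G (TT'.label 3) (TT'.label 2) = vertsBetween (mkG E2) (lab 3) (lab 2) := rfl
private lemma vbSS42 : vertsBetween TT'.G (TT'.label 4) (TT'.label 2) = vertsBetween (mkG E2) (lab 4) (lab 2) := rfl
private lemma vbSS43 : vertsBetween TT'.G (TT'.label 4) (TT'.label 3) = vertsBetween (mkG E2) (lab 4) (lab 3) := rfl
/-- There exist unrooted binary phylogenetic trees `T` and
`T'` on a taxon set `X` and a common 3-chain `K` of `T` and `T'` such that
some maximum agreement forest of `T` and `T'` does not preserve `K`.  (Hence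
the statement that every maximum agreement forest preserves a common 4-chain
cannot be strengthened from 4-chains to 3-chains.) -/
theorem exists_three_chain_not_preserved_by_some_MAF :
    ∃ (X : Finset ℕ) (T T' : PhyloForest ℕ X) (K : List ℕ),
      T.IsTree ∧ T'.IsTree ∧ K.length = 3 ∧ T.IsChain K ∧ T'.IsChain K ∧
      ∃ F : Finset (Finset ℕ), IsMAF T T' F ∧ ¬ Preserves F K.toFinset := by

  refine ⟨XX, TT, TT', [2,1,3], ?_, ?_, rfl, ?_, ?_, ?_⟩
  · exact conn1
  · exact conn2
  · -- TT.IsChain [2,1,3]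
    refine ⟨by decide, ?_⟩
    show IsChainIn G1 lab [2,1,3]
    refine ⟨by decide, by decide, Or.inr (Or.inl ⟨4, 4, [5], ?_, rfl, ?_, ?_⟩)⟩
    · simp [List.map_cons, pT1, pT2, pT3]
    · exact List.isChain_pair.2 (by decide)
    · decide
  · -- TT'.IsChain [2,1,3]
    refine ⟨by decide, ?_⟩
    show IsChainIn G2 lab [2,1,3]
    refine ⟨by decide, by decide, Or.inr (Or.inr ⟨4, 4, [5], ?_, rfl, ?_, ?_⟩)⟩
    · simp [List.map_cons, pS1, pS2, pS3]
    · exact List.isChain_pair.2 (by decide)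
    · decide
  · refine ⟨({({1} : Finset ℕ), ({2,3,4} : Finset ℕ)} : Finset (Finset ℕ)), ⟨⟨?_, ?_, ?_, ?_⟩, ?_⟩, ?_⟩
    · -- partition
      show IsPartitionOn XX _
      refine ⟨?_, ?_, ?_⟩ <;> decide
    · -- in one tree
      intro U _
      exact ⟨fun x _ y _ => conn1.preconnected _ _, fun x _ y _ => conn2.preconnected _ _⟩
    · -- same topology (vacuous: blocks have ≤ 3 taxa)
      intro U hU
      intro w x y z hw hx hy hz hnd
      exfalso
      fin_cases hU
      · simp only [Finset.mem_singleton] at hw hx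
        subst hw hx
        simp at hnd
      · have hsub : ([w,x,y,z] : List ℕ).toFinset ⊆ ({2,3,4} : Finset ℕ) := by
          intro a ha
          rw [List.mem_toFinset] at ha
          simp only [List.mem_cons, List.mem_singleton, List.not_mem_nil, or_false] at ha
          rcases ha with rfl | rfl | rfl | rfl <;> assumption
        have h4 := Finset.card_le_card hsub
        rw [List.toFinset_card_of_nodup hnd] at h4
        simp at h4
    · -- disjoint embeddings
      intro U hU W hW hne
      have key1 : Disjoint (embed TT {1}) (embed TT ({2,3,4} : Finset ℕ)) := by
        show Disjoint
          (⋃ x ∈ ({1} : Finset ℕ), ⋃ y ∈ ({1} : Finset ℕ), vertsBetween (mkG E1) (lab x) (lab y))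
          (⋃ x ∈ ({2,3,4} : Finset ℕ), ⋃ y ∈ ({2,3,4} : Finset ℕ), vertsBetween (mkG E1) (lab x) (lab y))
        rw [Set.disjoint_left]
        rintro a ha hb
        simp only [embed, Set.mem_iUnion, exists_prop, Finset.mem_singleton,
          Finset.mem_insert] at ha hb
        obtain ⟨x, rfl, y, rfl, ha⟩ := ha
        rw [vbT11] at ha
        simp only [Set.mem_setOf_eq, List.mem_singleton] at ha
        subst ha
        obtain ⟨x, hx, y, hy, hb⟩ := hb
        rcases hx with rfl | rfl | rfl <;> rcases hy with rfl | rfl | rfl <;>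
          simp only [vbTT22, vbTT23, vbTT24, vbTT32, vbTT33, vbTT34, vbTT42, vbTT43, vbTT44,
            vbT22, vbT23, vbT24, vbT32, vbT33, vbT34, vbT42, vbT43, vbT44,
            Set.mem_setOf_eq] at hb <;> exact absurd hb (by decide)
      have key2 : Disjoint (embed TT' {1}) (embed TT' ({2,3,4} : Finset ℕ)) := by
        show Disjoint
          (⋃ x ∈ ({1} : Finset ℕ), ⋃ y ∈ ({1} : Finset ℕ), vertsBetween (mkG E2) (lab x) (lab y))
          (⋃ x ∈ ({2,3,4} : Finset ℕ), ⋃ y ∈ ({2,3,4} : Finset ℕ), vertsBetween (mkG E2) (lab x) (lab y))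
        rw [Set.disjoint_left]
        rintro a ha hb
        simp only [embed, Set.mem_iUnion, exists_prop, Finset.mem_singleton,
          Finset.mem_insert] at ha hb
        obtain ⟨x, rfl, y, rfl, ha⟩ := ha
        rw [vbS11] at ha
        simp only [Set.mem_setOf_eq, List.mem_singleton] at ha
        subst ha
        obtain ⟨x, hx, y, hy, hb⟩ := hb
        rcases hx with rfl | rfl | rfl <;> rcases hy with rfl | rfl | rfl <;>
          simp only [vbSS22, vbSS23, vbSS24, vbSS32, vbSS33, vbSS34, vbSS42, vbSS43, vbSS44,
            vbS22, vbS23, vbS24, vbS32, vbS33, vbS34, vbS42, vbS43, vbS44,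
            Set.mem_setOf_eq] at hb <;> exact absurd hb (by decide)
      fin_cases hU <;> fin_cases hW
      · exact absurd rfl hne
      · exact ⟨key1, key2⟩
      · exact ⟨key1.symm, key2.symm⟩
      · exact absurd rfl hne
    · -- minimality
      intro F₂ hF₂
      by_contra hlt
      push_neg at hlt
      have hcard2 : Finset.card ({({1} : Finset ℕ), ({2,3,4} : Finset ℕ)} : Finset (Finset ℕ)) = 2 := by decide
      rw [hcard2] at hlt
      obtain ⟨⟨hblk, hdisj, hcov⟩, _, hst, _⟩ := hF₂
      obtain ⟨U, hU, h1U⟩ := hcov 1 (by decide)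
      have hne : F₂.Nonempty := ⟨U, hU⟩
      have hc1 : F₂.card = 1 := by
        have := Finset.card_pos.2 hne
        omega
      obtain ⟨U₀, hU₀⟩ := Finset.card_eq_one.1 hc1
      have hmem : ∀ x ∈ XX, x ∈ U₀ := by
        intro x hx
        obtain ⟨W, hW, hxW⟩ := hcov x hx
        rw [hU₀, Finset.mem_singleton] at hW
        rwa [hW] at hxW
      have hU₀mem : U₀ ∈ F₂ := by rw [hU₀]; exact Finset.mem_singleton_self _
      have hiff := hst U₀ hU₀mem 1 2 3 4 (hmem 1 (by decide)) (hmem 2 (by decide))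
        (hmem 3 (by decide)) (hmem 4 (by decide)) (by decide)
      have hQ : Quartet TT 1 2 3 4 := by
        show Disjoint (vertsBetween G1 (lab 1) (lab 2)) (vertsBetween G1 (lab 3) (lab 4))
        rw [vbT12, vbT34, Set.disjoint_left]
        intro a ha hb
        simp only [Set.mem_setOf_eq] at ha hb
        revert ha hb
        revert a
        decide
      have hQ' : ¬ Quartet TT' 1 2 3 4 := by
        show ¬ Disjoint (vertsBetween G2 (lab 1) (lab 2)) (vertsBetween G2 (lab 3) (lab 4))
        rw [vbS12, vbS34]
        rw [Set.not_disjoint_iff]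
        exact ⟨4, by simp only [Set.mem_setOf_eq]; decide, by simp only [Set.mem_setOf_eq]; decide⟩
      exact hQ' (hiff.1 hQ)
    · -- does not preserve K
      rintro ⟨U, hU, hsub⟩
      fin_cases hU
      · exact absurd (hsub (show (2:ℕ) ∈ [2,1,3].toFinset by decide))
          (show (2:ℕ) ∉ ({1} : Finset ℕ) by decide)
      · exact absurd (hsub (show (1:ℕ) ∈ [2,1,3].toFinset by decide))
          (show (1:ℕ) ∉ ({2,3,4} : Finset ℕ) by decide)

end Phylo
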